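/- Let λ* be a minimizer of λ ↦ η^⊤ d(μ,λ) over B'_k(m,μ) and let i ≠ k be a mode of λ*. Then λ*_i = μ_i, and for every neighbor ℓ of i, λ*_ℓ ≥ μ_ℓ. (That is, at a mode of the most confusing parameter, the parameter agrees with μ and dominates μ on the mode's neighborhood.) -/

import Mathlib

def IsMode {K : ℕ} (G : SimpleGraph (Fin K)) (lam : Fin K → ℝ) (k : Fin K) : Prop :=
  ∀ l, G.Adj k l → lam l < lam k

def AtMostModal {K : ℕ} (G : SimpleGraph (Fin K)) (m : ℕ) : Set (Fin K → ℝ) :=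
  {lam | {k | IsMode G lam k}.ncard ≤ m}

def ModeNeighborhood {K : ℕ} (G : SimpleGraph (Fin K)) (mu : Fin K → ℝ) : Set (Fin K) :=
  {j | IsMode G mu j ∨ ∃ i, IsMode G mu i ∧ G.Adj i j}

/-- `B'_k(m,μ) = {λ ∈ [μ_⋆,μ*]^K ∩ F_{≤m} : λ_k = λ_{k*(μ)} = μ*}`. -/
def CompactConfusingSetAt {K : ℕ} (G : SimpleGraph (Fin K)) (m : ℕ) (mu : Fin K → ℝ)
    (mlo mhi : ℝ) (kstar k : Fin K) : Set (Fin K → ℝ) :=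
  {lam | (∀ i, lam i ∈ Set.Icc mlo mhi) ∧ lam ∈ AtMostModal G m ∧
    lam k = mhi ∧ lam kstar = mhi}

/-- At any mode `i ≠ k` of the minimizer `λ*` of `η^⊤ d(μ,·)` over `B'_k(m,μ)`,
`λ*` agrees with `μ` at `i` and dominates `μ` on the neighborhood of `i`. -/
theorem mode_of_minimizer_agrees_with_mu {K m : ℕ} (G : SimpleGraph (Fin K))
    (mu : Fin K → ℝ) (kstar : Fin K) (mlo mhi : ℝ)
    (hmu : mu ∈ AtMostModal G m)
    (hkstar : ∀ j, j ≠ kstar → mu j < mu kstar)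
    (hmhi : mhi = mu kstar) (hmlo : ∀ i, mlo ≤ mu i)
    (k : Fin K) (hk : k ≠ kstar) (hkN : k ∉ ModeNeighborhood G mu)
    (η : Fin K → ℝ) (hη : ∀ j, 0 < η j)
    (d : Fin K → ℝ → ℝ → ℝ)
    (hd0 : ∀ j x y, 0 ≤ d j x y)
    (hdcont : ∀ j (x : ℝ), Continuous (d j x))
    (hdzero : ∀ j (x : ℝ), d j x x = 0)
    (hdanti : ∀ j (x : ℝ), StrictAntiOn (d j x) (Set.Iic x))
    (hdmono : ∀ j (x : ℝ), StrictMonoOn (d j x) (Set.Ici x))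
    (lamstar : Fin K → ℝ)
    (hmem : lamstar ∈ CompactConfusingSetAt G m mu mlo mhi kstar k)
    (hmin : ∀ lam ∈ CompactConfusingSetAt G m mu mlo mhi kstar k,
      ∑ j, η j * d j (mu j) (lamstar j) ≤ ∑ j, η j * d j (mu j) (lam j)) :
    ∀ i, i ≠ k → IsMode G lamstar i →
      lamstar i = mu i ∧ ∀ l, G.Adj i l → mu l ≤ lamstar l := by
  classical
  intro i hik hmode
  obtain ⟨hbox, hmm, hk1, hks⟩ := hmem
  have hmuhi : ∀ j, mu j ≤ mhi := by
    intro j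
    rcases eq_or_ne j kstar with h | h
    · rw [h, hmhi]
    · exact le_of_lt (hmhi ▸ hkstar j h)
  have key : ∀ (p : Fin K) (t : ℝ), p ≠ k → p ≠ kstar → mlo ≤ t → t ≤ mhi →
      (Function.update lamstar p t ∈ AtMostModal G m) →
      d p (mu p) t < d p (mu p) (lamstar p) → False := by
    intro p t hpk hpks h1 h2 hmod hd
    set lam' := Function.update lamstar p t with hlam'
    have hmem' : lam' ∈ CompactConfusingSetAt G m mu mlo mhi kstar k := by
      refine ⟨?_, hmod, ?_, ?_⟩
      · intro j
        rcases eq_or_ne j p with rfl | h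
        · simp only [hlam', Function.update_self]
          exact ⟨h1, h2⟩
        · simpa only [hlam', Function.update_of_ne h] using hbox j
      · rw [hlam', Function.update_of_ne (Ne.symm hpk), hk1]
      · rw [hlam', Function.update_of_ne (Ne.symm hpks), hks]
    have hsum : ∑ j, η j * d j (mu j) (lam' j) < ∑ j, η j * d j (mu j) (lamstar j) := by
      apply Finset.sum_lt_sum
      · intro j _
        rcases eq_or_ne j p with rfl | h
        · simp only [hlam', Function.update_self]
          exact mul_le_mul_of_nonneg_left (le_of_lt hd) (le_of_lt (hη j))
        · rw [hlam', Function.update_of_ne h]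
      · exact ⟨p, Finset.mem_univ p, by
          simp only [hlam', Function.update_self]
          exact mul_lt_mul_of_pos_left hd (hη p)⟩
    exact absurd (hmin lam' hmem') (not_le.mpr hsum)
  have modesub : ∀ t : ℝ, (∀ l, G.Adj i l → lamstar l < t) →
      Function.update lamstar i t ∈ AtMostModal G m := by
    intro t ht
    have hsub : {j | IsMode G (Function.update lamstar i t) j} ⊆ {j | IsMode G lamstar j} := by
      intro j hj
      simp only [Set.mem_setOf_eq] at hj ⊢
      rcases eq_or_ne j i with rfl | hji
      · exact hmode
      · by_cases hadj : G.Adj i j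
        · exfalso
          have h := hj i hadj.symm
          rw [Function.update_self, Function.update_of_ne hji] at h
          exact lt_asymm h (ht j hadj)
        · intro l hl
          have hli : l ≠ i := by
            intro he; subst he; exact hadj hl.symm
          have h := hj l hl
          rwa [Function.update_of_ne hli, Function.update_of_ne hji] at h
    simp only [AtMostModal, Set.mem_setOf_eq] at hmm ⊢
    exact le_trans (Set.ncard_le_ncard hsub (Set.toFinite _)) hmm
  have hpart1 : lamstar i = mu i := by
    by_contra hne
    have hiks : i ≠ kstar := by
      intro h; subst h
      exact hne (by rw [hks, hmhi])
    rcases lt_or_gt_of_ne hne with hlt | hgt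
    · refine key i (mu i) hik hiks (hmlo i) (hmuhi i) (modesub (mu i) ?_) ?_
      · intro l hl; exact lt_trans (hmode l hl) hlt
      · exact hdanti i (mu i) (Set.mem_Iic.mpr (le_of_lt hlt)) (Set.mem_Iic.mpr le_rfl) hlt
    · set c := Finset.univ.sup' ⟨i, Finset.mem_univ i⟩
        (fun l => if G.Adj i l then lamstar l else mu i) with hc
      have hc1 : mu i ≤ c := by
        have h := Finset.le_sup' (fun l => if G.Adj i l then lamstar l else mu i)
          (Finset.mem_univ i)
        rwa [if_neg (G.loopless.irrefl i)] at h
      have hc2 : c < lamstar i := by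
        rw [hc]; refine (Finset.sup'_lt_iff (H := _)).mpr ?_
        intro l _
        by_cases hl : G.Adj i l
        · rw [if_pos hl]; exact hmode l hl
        · rw [if_neg hl]; exact hgt
      have hc3 : ∀ l, G.Adj i l → lamstar l ≤ c := by
        intro l hl
        have h := Finset.le_sup' (fun l => if G.Adj i l then lamstar l else mu i)
          (Finset.mem_univ l)
        rwa [if_pos hl] at h
      refine key i ((c + lamstar i) / 2) hik hiks (by linarith [hmlo i]) ?_
        (modesub _ ?_) ?_
      · have := (hbox i).2; linarith
      · intro l hl; have := hc3 l hl; linarith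
      · exact hdmono i (mu i) (Set.mem_Ici.mpr (by linarith))
          (Set.mem_Ici.mpr (le_of_lt hgt)) (by linarith)
  refine ⟨hpart1, ?_⟩
  intro l hl
  by_contra hcon
  push_neg at hcon
  have hlk : l ≠ k := by
    intro he; subst he
    rw [hk1] at hcon
    exact absurd hcon (not_lt.mpr (hmuhi l))
  have hlks : l ≠ kstar := by
    intro he; subst he
    rw [hks, hmhi] at hcon
    exact lt_irrefl _ hcon
  have hli : lamstar l < lamstar i := hmode l hl
  set t := min (mu l) ((lamstar l + lamstar i) / 2) with ht
  have ht1 : lamstar l < t := lt_min hcon (by linarith)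
  have ht2 : t < lamstar i := lt_of_le_of_lt (min_le_right _ _) (by linarith)
  have ht3 : t ≤ mu l := min_le_left _ _
  have hmod : Function.update lamstar l t ∈ AtMostModal G m := by
    have hsub : {j | IsMode G (Function.update lamstar l t) j} ⊆ {j | IsMode G lamstar j} := by
      intro j hj
      simp only [Set.mem_setOf_eq] at hj ⊢
      rcases eq_or_ne j l with rfl | hjl
      · exfalso
        have h := hj i hl.symm
        rw [Function.update_self, Function.update_of_ne hl.ne] at h
        exact lt_asymm h ht2
      · intro p hp
        have h := hj p hp
        rw [Function.update_of_ne hjl] at h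
        rcases eq_or_ne p l with rfl | hpl
        · rw [Function.update_self] at h
          exact lt_trans ht1 h
        · rwa [Function.update_of_ne hpl] at h
    simp only [AtMostModal, Set.mem_setOf_eq] at hmm ⊢
    exact le_trans (Set.ncard_le_ncard hsub (Set.toFinite _)) hmm
  exact key l t hlk hlks (le_trans (hbox l).1 (le_of_lt ht1))
    (le_trans (le_of_lt ht2) (hbox i).2) hmod
    (hdanti l (mu l) (Set.mem_Iic.mpr (le_of_lt hcon)) (Set.mem_Iic.mpr ht3) ht1)
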